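/- Let s ∈ ℂ with Re s > 0 and let ρ_s(x,y) = s/(L_{xy}s² + R_{xy}s + D_{xy}) for finitely many neighbors y of a vertex x, with L_{xy}, R_{xy}, D_{xy} ≥ 0 not all zero. Then |Σ_y ρ_s(x,y)| ≥ (Re s / |s|) · Σ_y |ρ_s(x,y)|. -/

import Mathlib

open Complex in
lemma admittance_re_ge (s : ℂ) (hs : 0 < s.re) (L R D : ℝ) (hL : 0 ≤ L) (hR : 0 ≤ R)
    (hD : 0 ≤ D) :
    s.re / ‖s‖ * ‖(s / ((L : ℂ) * s ^ 2 + (R : ℂ) * s + (D : ℂ)))‖ ≤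
      (s / ((L : ℂ) * s ^ 2 + (R : ℂ) * s + (D : ℂ))).re := by
  set q : ℂ := (L : ℂ) * s ^ 2 + (R : ℂ) * s + (D : ℂ) with hqdef
  have hsne : s ≠ 0 := fun h => by simp [h] at hs
  have habs_s : 0 < ‖s‖ := norm_pos_iff.mpr hsne
  by_cases hq : q = 0
  · simp [hq]
  have habs_q : 0 < ‖q‖ := norm_pos_iff.mpr hq
  have hre_le : s.re ≤ ‖s‖ := Complex.re_le_norm s
  have h1 : ‖q‖ ≤ L * (‖s‖) ^ 2 + R * ‖s‖ + D := by
    calc ‖q‖ ≤ ‖((L : ℂ) * s ^ 2 + (R : ℂ) * s)‖ + ‖(D : ℂ)‖ :=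
          norm_add_le _ _
      _ ≤ ‖((L : ℂ) * s ^ 2)‖ + ‖((R : ℂ) * s)‖ + ‖(D : ℂ)‖ := by
          gcongr; exact norm_add_le _ _
      _ = L * (‖s‖) ^ 2 + R * ‖s‖ + D := by
          simp [norm_mul, norm_pow, Complex.norm_of_nonneg hL, Complex.norm_of_nonneg hR,
            Complex.norm_of_nonneg hD, abs_of_nonneg hL, abs_of_nonneg hR, abs_of_nonneg hD]
  -- key: s.re * |q| ≤ (s * conj q).re
  have h2 : (s * (starRingEnd ℂ) q).re
      = L * Complex.normSq s * s.re + R * Complex.normSq s + D * s.re := by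
    simp only [hqdef, map_add, map_mul, map_pow, Complex.conj_ofReal]
    have : s * ((L : ℂ) * (starRingEnd ℂ) s ^ 2 + (R : ℂ) * (starRingEnd ℂ) s + (D : ℂ))
        = (L : ℂ) * (s * (starRingEnd ℂ) s) * (starRingEnd ℂ) s
          + (R : ℂ) * (s * (starRingEnd ℂ) s) + (D : ℂ) * s := by ring
    rw [this, Complex.mul_conj]
    simp [Complex.add_re, Complex.mul_re, Complex.normSq_apply]
    try ring
  have hnsq : Complex.normSq s = (‖s‖) ^ 2 := (Complex.sq_norm s).symm
  have h3 : s.re * ‖q‖ ≤ (s * (starRingEnd ℂ) q).re := by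
    rw [h2, hnsq]
    calc s.re * ‖q‖ ≤ s.re * (L * (‖s‖) ^ 2 + R * ‖s‖ + D) := by
          exact mul_le_mul_of_nonneg_left h1 hs.le
      _ = L * (‖s‖) ^ 2 * s.re + R * (‖s‖ * s.re) + D * s.re := by ring
      _ ≤ L * (‖s‖) ^ 2 * s.re + R * (‖s‖) ^ 2 + D * s.re := by
          have : ‖s‖ * s.re ≤ (‖s‖) ^ 2 := by
            rw [sq]; exact mul_le_mul_of_nonneg_left hre_le habs_s.le
          gcongr
  have h4 : (s / q).re = (s * (starRingEnd ℂ) q).re / (‖q‖) ^ 2 := by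
    rw [Complex.div_re, Complex.mul_re, Complex.conj_re, Complex.conj_im, ← Complex.sq_norm]
    ring
  rw [h4, norm_div]
  rw [div_mul_div_comm, div_le_div_iff₀ (by positivity) (by positivity)]
  have hkey := mul_le_mul_of_nonneg_right h3 (mul_nonneg habs_s.le habs_q.le)
  nlinarith [hkey]

open Finset in
/-- for a finite family of admittances at a vertex,
|Σ_y ρ_s(x,y)| ≥ (Re s/|s|)·Σ_y |ρ_s(x,y)|. -/
theorem abs_sum_admittance_ge (s : ℂ) (hs : 0 < s.re) {ι : Type*} [Fintype ι]
    (L R D : ι → ℝ) (hL : ∀ y, 0 ≤ L y) (hR : ∀ y, 0 ≤ R y) (hD : ∀ y, 0 ≤ D y)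
    (hsum : ∀ y, 0 < L y + R y + D y) :
    (s.re / ‖s‖) *
        ∑ y, ‖(s / ((L y : ℂ) * s ^ 2 + (R y : ℂ) * s + (D y : ℂ)))‖ ≤
      ‖(∑ y, s / ((L y : ℂ) * s ^ 2 + (R y : ℂ) * s + (D y : ℂ)))‖ := by
  calc (s.re / ‖s‖) *
        ∑ y, ‖(s / ((L y : ℂ) * s ^ 2 + (R y : ℂ) * s + (D y : ℂ)))‖
      = ∑ y, s.re / ‖s‖ *
          ‖(s / ((L y : ℂ) * s ^ 2 + (R y : ℂ) * s + (D y : ℂ)))‖ := by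
        rw [mul_sum]
    _ ≤ ∑ y, (s / ((L y : ℂ) * s ^ 2 + (R y : ℂ) * s + (D y : ℂ))).re :=
        Finset.sum_le_sum fun y _ => admittance_re_ge s hs _ _ _ (hL y) (hR y) (hD y)
    _ = (∑ y, s / ((L y : ℂ) * s ^ 2 + (R y : ℂ) * s + (D y : ℂ))).re := by
        rw [Complex.re_sum]
    _ ≤ ‖(∑ y, s / ((L y : ℂ) * s ^ 2 + (R y : ℂ) * s + (D y : ℂ)))‖ :=
        Complex.re_le_norm _
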